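/- Let f : ℝ → ℝ be twice continuously differentiable and let u : ℝ × [0,∞) → ℝ be twice continuously differentiable and satisfy, at every point (t,x), the equation u_t(t,x) + f'(u(t,x))·u_x(t,x) = (1/2)∫₀^x f''(u(t,y))·u_x(t,y)² dy. Then the energy conservation law (u_x²)_t + (f'(u)·u_x²)_x = 0 holds at every point, i.e. ∂_t(u_x(t,x)²) + ∂_x(f'(u(t,x))·u_x(t,x)²) = 0 for all (t,x). -/

import Mathlib

open MeasureTheory Set Real intervalIntegral

theorem stmt8 (f : ℝ → ℝ) (hf : ContDiff ℝ 2 f)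
    (u : ℝ → ℝ → ℝ) (hu : ContDiff ℝ 2 (Function.uncurry u))
    (heq : ∀ t x : ℝ, 0 ≤ x →
      deriv (fun s => u s x) t + deriv f (u t x) * deriv (fun z => u t z) x =
        (1 / 2) * ∫ y in (0:ℝ)..x, deriv (deriv f) (u t y) * (deriv (fun z => u t z) y) ^ 2) :
    ∀ t x : ℝ, 0 ≤ x →
      deriv (fun s => (deriv (fun z => u s z) x) ^ 2) t +
        deriv (fun z => deriv f (u t z) * (deriv (fun w => u t w) z) ^ 2) x = 0 := by
  intro t x hx0
  set F := Function.uncurry u with hFdef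
  set G := fderiv ℝ F with hGdef
  have hG1 : ContDiff ℝ 1 G := hu.fderiv_right (by norm_num)
  -- second derivative of f
  have hf' : ContDiff ℝ 1 (deriv f) := by
    have := (contDiff_succ_iff_deriv (n := 1)).mp (by exact_mod_cast hf)
    exact this.2.2
  have hf'' : Continuous (deriv (deriv f)) := (contDiff_one_iff_deriv.mp hf').2
  -- partial derivatives of u
  have hdx : ∀ s z : ℝ, HasDerivAt (fun w => u s w) (G (s, z) (0, 1)) z := by
    intro s z
    have h1 : HasFDerivAt F (G (s, z)) (s, z) := ((hu.differentiable (by norm_num)) _).hasFDerivAt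
    have h2 : HasDerivAt (fun w => ((s, w) : ℝ × ℝ)) ((0:ℝ), (1:ℝ)) z := by
      simpa using ((hasDerivAt_const z s).prodMk (hasDerivAt_id z))
    exact h1.comp_hasDerivAt z h2
  have hdt : ∀ s z : ℝ, HasDerivAt (fun w => u w z) (G (s, z) (1, 0)) s := by
    intro s z
    have h1 : HasFDerivAt F (G (s, z)) (s, z) := ((hu.differentiable (by norm_num)) _).hasFDerivAt
    have h2 : HasDerivAt (fun w => ((w, z) : ℝ × ℝ)) ((1:ℝ), (0:ℝ)) s := by
      simpa using ((hasDerivAt_id s).prodMk (hasDerivAt_const s z))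
    exact h1.comp_hasDerivAt s h2
  -- directional derivatives of p ↦ G p v
  have hGF : ∀ (v : ℝ × ℝ) (p : ℝ × ℝ), HasFDerivAt (fun q => G q v)
      ((ContinuousLinearMap.apply ℝ ℝ v).comp (fderiv ℝ G p)) p := fun v p =>
    (ContinuousLinearMap.apply ℝ ℝ v).hasFDerivAt.comp p ((hG1.differentiable one_ne_zero) p).hasFDerivAt
  have hGd : ∀ (v : ℝ × ℝ) (s z : ℝ),
      HasDerivAt (fun w => G (s, w) v) (fderiv ℝ G (s, z) (0, 1) v) z := by
    intro v s z
    have h2 : HasDerivAt (fun w => ((s, w) : ℝ × ℝ)) ((0:ℝ), (1:ℝ)) z := by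
      simpa using ((hasDerivAt_const z s).prodMk (hasDerivAt_id z))
    exact (hGF v (s, z)).comp_hasDerivAt z h2
  have hGt : ∀ (v : ℝ × ℝ) (s z : ℝ),
      HasDerivAt (fun w => G (w, z) v) (fderiv ℝ G (s, z) (1, 0) v) s := by
    intro v s z
    have h2 : HasDerivAt (fun w => ((w, z) : ℝ × ℝ)) ((1:ℝ), (0:ℝ)) s := by
      simpa using ((hasDerivAt_id s).prodMk (hasDerivAt_const s z))
    exact (hGF v (s, z)).comp_hasDerivAt s h2
  -- the integrand
  set c : ℝ → ℝ := fun y => deriv (deriv f) (u t y) * (G (t, y) (0, 1)) ^ 2 with hcdef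
  have hcu : Continuous fun y : ℝ => u t y := hu.continuous.comp (Continuous.prodMk_right t)
  have hcq : Continuous fun y : ℝ => G (t, y) (0, 1) :=
    ((hG1.clm_apply contDiff_const).continuous).comp (Continuous.prodMk_right t)
  have hc : Continuous c := (hf''.comp hcu).mul (hcq.pow 2)
  have hFTC : ∀ z : ℝ, HasDerivAt (fun w => ∫ y in (0:ℝ)..w, c y) (c z) z := fun z =>
    intervalIntegral.integral_hasDerivAt_right (hc.intervalIntegrable 0 z)
      hc.stronglyMeasurable.stronglyMeasurableAtFilter hc.continuousAt
  -- the equation, rewritten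
  have heq' : ∀ z, z ∈ Ici (0:ℝ) →
      G (t, z) (1, 0) + deriv f (u t z) * G (t, z) (0, 1)
        - (1 / 2) * ∫ y in (0:ℝ)..z, c y = 0 := by
    intro z hz
    have h := heq t z hz
    rw [(hdt t z).deriv, (hdx t z).deriv] at h
    have hint : (∫ y in (0:ℝ)..z, deriv (deriv f) (u t y) * (deriv (fun w => u t w) y) ^ 2)
        = ∫ y in (0:ℝ)..z, c y := by
      apply intervalIntegral.integral_congr
      intro y _
      rw [hcdef]
      simp only
      rw [(hdx t y).deriv]
    rw [hint] at h
    linarith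
  -- derivative of the chain-rule term for f'
  have h2x : ∀ z : ℝ, HasDerivAt (fun w => deriv f (u t w))
      (deriv (deriv f) (u t z) * G (t, z) (0, 1)) z := by
    intro z
    have hdf : HasDerivAt (deriv f) (deriv (deriv f) (u t z)) (u t z) :=
      ((hf'.differentiable one_ne_zero) (u t z)).hasDerivAt
    exact hdf.comp z (hdx t z)
  -- differentiate the equation within Ici 0
  have hg : ∀ z : ℝ, HasDerivAt
      (fun w => G (t, w) (1, 0) + deriv f (u t w) * G (t, w) (0, 1)
        - (1 / 2) * ∫ y in (0:ℝ)..w, c y)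
      (fderiv ℝ G (t, z) (0, 1) (1, 0)
        + (deriv (deriv f) (u t z) * G (t, z) (0, 1) * G (t, z) (0, 1)
          + deriv f (u t z) * (fderiv ℝ G (t, z) (0, 1) (0, 1)))
        - (1 / 2) * c z) z := by
    intro z
    exact ((hGd (1, 0) t z).add ((h2x z).mul (hGd (0, 1) t z))).sub
      (HasDerivAt.const_mul (1 / 2 : ℝ) (hFTC z))
  have hU : UniqueDiffWithinAt ℝ (Ici (0:ℝ)) x := uniqueDiffOn_Ici 0 x hx0
  have e1 := ((hg x).hasDerivWithinAt).derivWithin hU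
  have e2 := ((hasDerivWithinAt_const x (Ici (0:ℝ)) (0:ℝ)).congr heq' (heq' x hx0)).derivWithin hU
  have hkey : fderiv ℝ G (t, x) (0, 1) (1, 0)
      + (deriv (deriv f) (u t x) * G (t, x) (0, 1) * G (t, x) (0, 1)
        + deriv f (u t x) * (fderiv ℝ G (t, x) (0, 1) (0, 1)))
      - (1 / 2) * c x = 0 := e1.symm.trans e2
  -- symmetry of second derivatives (Clairaut)
  have hsym : fderiv ℝ G (t, x) (0, 1) (1, 0) = fderiv ℝ G (t, x) (1, 0) (0, 1) :=
    (hu.contDiffAt.isSymmSndFDerivAt (by norm_num)) (0, 1) (1, 0)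
  rw [hsym] at hkey
  have hcx : c x = deriv (deriv f) (u t x) * G (t, x) (0, 1) ^ 2 := rfl
  rw [hcx] at hkey
  -- rewrite the goal
  have eg1 : (fun s => (deriv (fun z => u s z) x) ^ 2) = fun s => (G (s, x) (0, 1)) ^ 2 :=
    funext fun s => by rw [(hdx s x).deriv]
  have eg2 : (fun z => deriv f (u t z) * (deriv (fun w => u t w) z) ^ 2)
      = fun z => deriv f (u t z) * (G (t, z) (0, 1)) ^ 2 :=
    funext fun z => by rw [(hdx t z).deriv]
  rw [eg1, eg2, ((hGt (0, 1) t x).fun_pow 2).deriv, ((h2x x).fun_mul ((hGd (0, 1) t x).fun_pow 2)).deriv]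
  push_cast
  linear_combination (2 * G (t, x) (0, 1)) * hkey
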